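/- The proper controllability Gramian P_p := ∫₀^∞ F_J(t)·B·B^T·F_J(t)^T dt is well defined and solves the projected continuous-time Lyapunov equation E·P_p·A^T + A·P_p·E^T = −P_l·B·B^T·P_l^T together with the projection condition P_p = P_r·P_p·P_r^T. -/

import Mathlib

open MeasureTheory Matrix

/-- The matrix exponential of a real square matrix. -/
noncomputable def mexp {d : ℕ} (X : Matrix (Fin d) (Fin d) ℝ) : Matrix (Fin d) (Fin d) ℝ :=
  NormedSpace.exp X

/-- The operator norm on real matrices, induced by the Euclidean (`ℓ²`) norms. -/
noncomputable def opNorm {d e : ℕ} (X : Matrix (Fin d) (Fin e) ℝ) : ℝ :=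
  letI := Matrix.instL2OpNormedAddCommGroup (m := Fin d) (n := Fin e) (𝕜 := ℝ)
  ‖X‖

/-- Entrywise integral over `(0, ∞)` of a matrix-valued function. -/
noncomputable def matIntIoi {a b : Type*} (F : ℝ → Matrix a b ℝ) : Matrix a b ℝ :=
  Matrix.of fun i j => ∫ t in Set.Ioi (0:ℝ), F t i j

/-- Entrywise integrability over `(0, ∞)` of a matrix-valued function. -/
def MatIntegrableIoi {a b : Type*} (F : ℝ → Matrix a b ℝ) : Prop :=
  ∀ i j, MeasureTheory.IntegrableOn (fun t => F t i j) (Set.Ioi 0)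

/-- Kronecker product of two vectors in `ℝ^m`, an element of `ℝ^{m²}`. -/
def kron {m : ℕ} (a b : Fin m → ℝ) : Fin m × Fin m → ℝ := fun p => a p.1 * b p.2

/-- Vectorization of an `m × m` matrix as an element of `ℝ^{m²}`. -/
def vecm {m : ℕ} (X : Matrix (Fin m) (Fin m) ℝ) : Fin m × Fin m → ℝ := fun p => X p.1 p.2

/-- Squared Euclidean norm of a vector. -/
def enormSq {ι : Type*} [Fintype ι] (v : ι → ℝ) : ℝ := ∑ i, (v i) ^ 2

/-- Euclidean inner product of two vectors. -/
def dotv {ι : Type*} [Fintype ι] (v w : ι → ℝ) : ℝ := ∑ i, v i * w i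

/- ### Auxiliary lemmas -/

lemma entry_abs_le_opNorm {d e : ℕ} (X : Matrix (Fin d) (Fin e) ℝ) (i : Fin d) (j : Fin e) :
    |X i j| ≤ opNorm X := by
  letI := Matrix.instL2OpNormedAddCommGroup (m := Fin d) (n := Fin e) (𝕜 := ℝ)
  have h := X.l2_opNorm_mulVec (EuclideanSpace.single j (1:ℝ))
  set w : EuclideanSpace ℝ (Fin d) :=
    (EuclideanSpace.equiv (Fin d) ℝ).symm (X *ᵥ (EuclideanSpace.single j (1:ℝ)))
  have hwi : w i = X i j := by
    simp [w, Matrix.mulVec, dotProduct, EuclideanSpace.single_apply]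
  have h1 : |w i| ≤ ‖w‖ := by
    have := abs_real_inner_le_norm (EuclideanSpace.single i (1:ℝ)) w
    simpa [EuclideanSpace.norm_single, EuclideanSpace.inner_single_left] using this
  calc |X i j| = |w i| := by rw [hwi]
    _ ≤ ‖w‖ := h1
    _ ≤ ‖X‖ * ‖EuclideanSpace.single j (1:ℝ)‖ := h
    _ = opNorm X := by simp [EuclideanSpace.norm_single, opNorm]

lemma hasDerivAt_mexp_entry {d : ℕ} (J : Matrix (Fin d) (Fin d) ℝ) (t : ℝ) (a b : Fin d) :
    HasDerivAt (fun s : ℝ => mexp (s • J) a b) ((J * mexp (t • J)) a b) t := by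
  letI : SeminormedRing (Matrix (Fin d) (Fin d) ℝ) := Matrix.linftyOpSemiNormedRing
  letI : NormedRing (Matrix (Fin d) (Fin d) ℝ) := Matrix.linftyOpNormedRing
  letI : NormedAlgebra ℝ (Matrix (Fin d) (Fin d) ℝ) := Matrix.linftyOpNormedAlgebra
  have h : HasDerivAt (fun s : ℝ => NormedSpace.exp (s • J)) (J * NormedSpace.exp (t • J)) t :=
    hasDerivAt_exp_smul_const' J t
  let L : Matrix (Fin d) (Fin d) ℝ →L[ℝ] ℝ :=
    LinearMap.toContinuousLinearMap
      { toFun := fun X => X a b, map_add' := by intros; rfl, map_smul' := by intros; rfl }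
  exact L.hasFDerivAt.comp_hasDerivAt t h

lemma mexp_zero' {d : ℕ} : mexp (0 : Matrix (Fin d) (Fin d) ℝ) = 1 := by
  letI : SeminormedRing (Matrix (Fin d) (Fin d) ℝ) := Matrix.linftyOpSemiNormedRing
  letI : NormedRing (Matrix (Fin d) (Fin d) ℝ) := Matrix.linftyOpNormedRing
  letI : NormedAlgebra ℝ (Matrix (Fin d) (Fin d) ℝ) := Matrix.linftyOpNormedAlgebra
  exact NormedSpace.exp_zero (𝔸 := Matrix (Fin d) (Fin d) ℝ)

lemma sandwich_entry {nf ni : ℕ} {c : Type*} [Fintype c]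
    (P : Matrix (Fin nf ⊕ Fin ni) (Fin nf ⊕ Fin ni) ℝ)
    (X : Matrix (Fin nf) (Fin nf) ℝ)
    (Q : Matrix (Fin nf ⊕ Fin ni) c ℝ) (i : Fin nf ⊕ Fin ni) (j : c) :
    (P * (fromBlocks X 0 0 0 : Matrix (Fin nf ⊕ Fin ni) (Fin nf ⊕ Fin ni) ℝ) * Q) i j
      = ∑ a, ∑ b, P i (Sum.inl a) * X a b * Q (Sum.inl b) j := by
  rw [Finset.sum_comm]
  simp [Matrix.mul_apply, Fintype.sum_sum_type, Matrix.fromBlocks, Finset.sum_mul, Finset.mul_sum]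

lemma mul3T_entry {d : ℕ} (X Y Z : Matrix (Fin d) (Fin d) ℝ) (a b : Fin d) :
    (X * Y * Zᵀ) a b = ∑ c', ∑ d', X a c' * Y c' d' * Z b d' := by
  rw [Finset.sum_comm]
  simp [Matrix.mul_apply, Finset.sum_mul, Matrix.transpose_apply]

/-- The proper controllability Gramian `P_p = ∫₀^∞ F_J(t)·B·Bᵀ·F_J(t)ᵀ dt` is
well defined and solves the projected continuous-time Lyapunov equation
`E·P_p·Aᵀ + A·P_p·Eᵀ = −P_l·B·Bᵀ·P_lᵀ` together with `P_p = P_r·P_p·P_rᵀ`. -/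
theorem proper_controllability_gramian
    {nf ni m : ℕ} (hm : 0 < m) (ν : ℕ) (hν : 0 < ν)
    -- Weierstraß canonical form data for the full-order system
    (W T Winv Tinv : Matrix (Fin nf ⊕ Fin ni) (Fin nf ⊕ Fin ni) ℝ)
    (hW : W * Winv = 1) (hW' : Winv * W = 1)
    (hT : T * Tinv = 1) (hT' : Tinv * T = 1)
    (J : Matrix (Fin nf) (Fin nf) ℝ) (N : Matrix (Fin ni) (Fin ni) ℝ) (hN : N ^ ν = 0)
    (C α : ℝ) (hC : 0 < C) (hα : 0 < α)
    (hJ : ∀ t : ℝ, 0 ≤ t → opNorm (mexp (t • J)) ≤ C * Real.exp (-α * t))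
    (E A : Matrix (Fin nf ⊕ Fin ni) (Fin nf ⊕ Fin ni) ℝ)
    (hE : E = W * fromBlocks 1 0 0 N * T)
    (hA : A = W * fromBlocks J 0 0 1 * T)
    (B : Matrix (Fin nf ⊕ Fin ni) (Fin m) ℝ)
    (M : Matrix (Fin nf ⊕ Fin ni) (Fin nf ⊕ Fin ni) ℝ) (hM : M.IsSymm)
    -- spectral projectors
    (Pr Pl : Matrix (Fin nf ⊕ Fin ni) (Fin nf ⊕ Fin ni) ℝ)
    (hPr : Pr = Tinv * fromBlocks 1 0 0 0 * T)
    (hPl : Pl = W * fromBlocks 1 0 0 0 * Winv)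
    -- fundamental solution matrices
    (FJ : ℝ → Matrix (Fin nf ⊕ Fin ni) (Fin nf ⊕ Fin ni) ℝ)
    (hFJ : ∀ t : ℝ, FJ t = Tinv * fromBlocks (mexp (t • J)) 0 0 0 * Winv)
    (FN : ℕ → Matrix (Fin nf ⊕ Fin ni) (Fin nf ⊕ Fin ni) ℝ)
    (hFN : ∀ k : ℕ, FN k = Tinv * fromBlocks 0 0 0 (-(N ^ k)) * Winv)
    -- proper and improper controllability Gramians
    (Pp : Matrix (Fin nf ⊕ Fin ni) (Fin nf ⊕ Fin ni) ℝ)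
    (hPp : Pp = matIntIoi fun t => FJ t * B * Bᵀ * (FJ t)ᵀ)
    (Pimp : Matrix (Fin nf ⊕ Fin ni) (Fin nf ⊕ Fin ni) ℝ)
    (hPimp : Pimp = ∑ k ∈ Finset.range ν, FN k * B * Bᵀ * (FN k)ᵀ)
    :
    MatIntegrableIoi (fun t => FJ t * B * Bᵀ * (FJ t)ᵀ) ∧
      E * Pp * Aᵀ + A * Pp * Eᵀ = -(Pl * B * Bᵀ * Plᵀ) ∧
      Pp = Pr * Pp * Prᵀ := by
  -- abbreviations
  set H : ℝ → Matrix (Fin nf) (Fin nf) ℝ := fun t => mexp (t • J) with hHdef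
  set U : Matrix (Fin nf ⊕ Fin ni) (Fin m) ℝ := Winv * B with hUdef
  set Q : Matrix (Fin nf) (Fin nf) ℝ := (U * Uᵀ).toBlocks₁₁ with hQdef
  set S : ℝ → Matrix (Fin nf) (Fin nf) ℝ := fun t => H t * Q * (H t)ᵀ with hSdef
  -- basic facts about H
  have hHd : ∀ (t : ℝ) (a b : Fin nf), HasDerivAt (fun s => H s a b) ((J * H t) a b) t :=
    fun t a b => hasDerivAt_mexp_entry J t a b
  have hHcont : ∀ a b : Fin nf, Continuous fun t => H t a b :=
    fun a b => continuous_iff_continuousAt.2 fun t => (hHd t a b).continuousAt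
  have hHb : ∀ t : ℝ, 0 ≤ t → ∀ a b : Fin nf, |H t a b| ≤ C * Real.exp (-α * t) :=
    fun t ht a b => (entry_abs_le_opNorm _ a b).trans (hJ t ht)
  set KQ : ℝ := ∑ c : Fin nf, ∑ d : Fin nf, |Q c d| with hKQdef
  have hsq : ∀ t : ℝ, (C * Real.exp (-α * t))^2 = C^2 * Real.exp (-(2*α) * t) := by
    intro t
    rw [mul_pow, sq (Real.exp _), ← Real.exp_add]
    ring_nf
  -- entrywise formula for S
  have hSentry : ∀ (t : ℝ) (a b : Fin nf),
      S t a b = ∑ c', ∑ d', H t a c' * Q c' d' * H t b d' := fun t a b => mul3T_entry _ _ _ _ _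
  -- pointwise bound for S
  have hSb : ∀ t : ℝ, 0 ≤ t → ∀ a b : Fin nf, |S t a b| ≤ (KQ * C^2) * Real.exp (-(2*α) * t) := by
    intro t ht a b
    rw [hSentry t a b]
    have e0 : (0:ℝ) ≤ C * Real.exp (-α * t) := by positivity
    calc |∑ c', ∑ d', H t a c' * Q c' d' * H t b d'|
        ≤ ∑ c', ∑ d', |H t a c' * Q c' d' * H t b d'| :=
          (Finset.abs_sum_le_sum_abs _ _).trans
            (Finset.sum_le_sum fun c _ => Finset.abs_sum_le_sum_abs _ _)
      _ ≤ ∑ c' : Fin nf, ∑ d' : Fin nf, |Q c' d'| * (C * Real.exp (-α * t))^2 := by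
          refine Finset.sum_le_sum fun c _ => Finset.sum_le_sum fun d _ => ?_
          rw [abs_mul, abs_mul]
          calc |H t a c| * |Q c d| * |H t b d|
              ≤ (C * Real.exp (-α * t)) * |Q c d| * (C * Real.exp (-α * t)) := by
                apply mul_le_mul _ (hHb t ht b d) (abs_nonneg _) (by positivity)
                exact mul_le_mul (hHb t ht a c) le_rfl (abs_nonneg _) e0
            _ = |Q c d| * (C * Real.exp (-α * t))^2 := by ring
      _ = (KQ * C^2) * Real.exp (-(2*α) * t) := by
          simp only [← Finset.sum_mul, hsq t]
          ring
  -- continuity and integrability of S entries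
  have hScont : ∀ a b : Fin nf, Continuous fun t => S t a b := by
    intro a b
    have : (fun t => S t a b) = fun t => ∑ c', ∑ d', H t a c' * Q c' d' * H t b d' :=
      funext fun t => hSentry t a b
    rw [this]
    exact continuous_finset_sum _ fun c _ => continuous_finset_sum _ fun d _ =>
      ((hHcont a c).mul continuous_const).mul (hHcont b d)
  have hSint : ∀ a b : Fin nf, IntegrableOn (fun t => S t a b) (Set.Ioi 0) := by
    intro a b
    have hg : IntegrableOn (fun t => (KQ * C^2) * Real.exp (-(2*α) * t)) (Set.Ioi (0:ℝ)) :=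
      (exp_neg_integrableOn_Ioi 0 (by positivity)).const_mul _
    refine hg.integrable.mono' ((hScont a b).aestronglyMeasurable.restrict) ?_
    filter_upwards [ae_restrict_mem measurableSet_Ioi] with t ht
    rw [Real.norm_eq_abs]
    exact hSb t ht.le a b
  -- derivative of S entries
  set D : ℝ → Matrix (Fin nf) (Fin nf) ℝ := fun t => J * S t + S t * Jᵀ with hDdef
  have hDentry : ∀ (t : ℝ) (a b : Fin nf),
      D t a b = ∑ c', ∑ d', ((J * H t) a c' * Q c' d' * H t b d'
        + H t a c' * Q c' d' * (J * H t) b d') := by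
    intro t a b
    show (J * S t + S t * Jᵀ) a b = _
    have e1 : (J * S t) a b = ∑ c', ∑ d', (J * H t) a c' * Q c' d' * H t b d' := by
      have : J * S t = (J * H t) * Q * (H t)ᵀ := by
        rw [hSdef]; simp only [← Matrix.mul_assoc]
      rw [this]; exact mul3T_entry _ _ _ _ _
    have e2 : (S t * Jᵀ) a b = ∑ c', ∑ d', H t a c' * Q c' d' * (J * H t) b d' := by
      have : S t * Jᵀ = H t * Q * (J * H t)ᵀ := by
        rw [hSdef]; simp only [Matrix.transpose_mul, ← Matrix.mul_assoc]
      rw [this]; exact mul3T_entry _ _ _ _ _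
    rw [Matrix.add_apply, e1, e2, ← Finset.sum_add_distrib]
    exact Finset.sum_congr rfl fun c _ => (Finset.sum_add_distrib).symm
  have hSd : ∀ (t : ℝ) (a b : Fin nf), HasDerivAt (fun s => S s a b) (D t a b) t := by
    intro t a b
    have hfun : (fun s => S s a b) = fun s => ∑ c', ∑ d', H s a c' * Q c' d' * H s b d' :=
      funext fun s => hSentry s a b
    rw [hfun, hDentry t a b]
    refine HasDerivAt.fun_sum fun c _ => HasDerivAt.fun_sum fun d _ => ?_
    have := ((hHd t a c).mul_const (Q c d)).fun_mul (hHd t b d)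
    convert this using 1 <;> ring
  -- integrability of D entries
  have hDint : ∀ a b : Fin nf, IntegrableOn (fun t => D t a b) (Set.Ioi 0) := by
    intro a b
    have : (fun t => D t a b)
        = fun t => (∑ c, J a c * S t c b) + ∑ c, S t a c * Jᵀ c b :=
      funext fun t => by simp [hDdef, Matrix.add_apply, Matrix.mul_apply]
    rw [this]
    exact (integrable_finset_sum _ fun c _ => (hSint c b).const_mul _).add
      (integrable_finset_sum _ fun c _ => (hSint a c).mul_const _)
  -- S at 0 and at infinity
  have hS0 : S 0 = Q := by
    have h0 : H 0 = 1 := by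
      show mexp ((0:ℝ) • J) = 1
      rw [zero_smul]; exact mexp_zero'
    show H 0 * Q * (H 0)ᵀ = Q
    rw [h0]; simp
  have hStend : ∀ a b : Fin nf, Filter.Tendsto (fun t => S t a b) Filter.atTop (nhds 0) := by
    intro a b
    refine squeeze_zero_norm'
      (a := fun t => (KQ * C^2) * Real.exp (-(2*α) * t)) ?_ ?_
    · filter_upwards [Filter.eventually_ge_atTop (0:ℝ)] with t ht
      rw [Real.norm_eq_abs]
      exact hSb t ht a b
    · have h1 : Filter.Tendsto (fun t : ℝ => (2*α) * t) Filter.atTop Filter.atTop :=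
        Filter.Tendsto.const_mul_atTop (by positivity) Filter.tendsto_id
      have h2 : Filter.Tendsto (fun t : ℝ => Real.exp (-(2*α) * t)) Filter.atTop (nhds 0) :=
        (Real.tendsto_exp_neg_atTop_nhds_zero.comp h1).congr
          (fun t => by simp [Function.comp, neg_mul])
      simpa using h2.const_mul (KQ * C^2)
  -- FTC
  have hFTC : ∀ a b : Fin nf, (∫ t in Set.Ioi (0:ℝ), D t a b) = - Q a b := by
    intro a b
    have := integral_Ioi_of_hasDerivAt_of_tendsto
      (f := fun t => S t a b) (f' := fun t => D t a b) (a := 0)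
      ((hScont a b).continuousWithinAt) (fun x _ => hSd x a b) (hDint a b) (hStend a b)
    rw [this]
    simp [hS0]
  -- the limit Gramian block
  set Sig : Matrix (Fin nf) (Fin nf) ℝ :=
    Matrix.of (fun a b => ∫ t in Set.Ioi (0:ℝ), S t a b) with hSigdef
  have hLyapCore : J * Sig + Sig * Jᵀ = -Q := by
    ext a b
    rw [Matrix.add_apply, Matrix.mul_apply, Matrix.mul_apply]
    have h1 : ∑ c, J a c * Sig c b = ∫ t in Set.Ioi (0:ℝ), ∑ c, J a c * S t c b := by
      calc ∑ c, J a c * Sig c b = ∑ c, ∫ t in Set.Ioi (0:ℝ), J a c * S t c b :=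
            Finset.sum_congr rfl fun c _ => (integral_const_mul _ _).symm
        _ = ∫ t in Set.Ioi (0:ℝ), ∑ c, J a c * S t c b :=
            (integral_finset_sum _ fun c _ => (hSint c b).const_mul _).symm
    have h2 : ∑ c, Sig a c * Jᵀ c b = ∫ t in Set.Ioi (0:ℝ), ∑ c, S t a c * Jᵀ c b := by
      calc ∑ c, Sig a c * Jᵀ c b = ∑ c, ∫ t in Set.Ioi (0:ℝ), S t a c * Jᵀ c b :=
            Finset.sum_congr rfl fun c _ => (integral_mul_const _ _).symm
        _ = ∫ t in Set.Ioi (0:ℝ), ∑ c, S t a c * Jᵀ c b :=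
            (integral_finset_sum _ fun c _ => (hSint a c).mul_const _).symm
    rw [h1, h2, ← integral_add
        (integrable_finset_sum _ fun c _ => (hSint c b).const_mul _)
        (integrable_finset_sum _ fun c _ => (hSint a c).mul_const _)]
    have : (fun t => (∑ c, J a c * S t c b) + ∑ c, S t a c * Jᵀ c b)
        = fun t => D t a b :=
      funext fun t => by simp [hDdef, Matrix.add_apply, Matrix.mul_apply]
    rw [this, hFTC a b, Matrix.neg_apply]
  -- matrix-level formula for the integrand
  have hmid : ∀ t : ℝ, (fromBlocks (H t) 0 0 0 : Matrix (Fin nf ⊕ Fin ni) (Fin nf ⊕ Fin ni) ℝ)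
      * (U * Uᵀ) * (fromBlocks (H t) 0 0 0 : Matrix (Fin nf ⊕ Fin ni) (Fin nf ⊕ Fin ni) ℝ)ᵀ
      = fromBlocks (S t) 0 0 0 := by
    intro t
    conv_lhs => rw [← Matrix.fromBlocks_toBlocks (U * Uᵀ)]
    rw [Matrix.fromBlocks_transpose, Matrix.fromBlocks_multiply, Matrix.fromBlocks_multiply]
    simp [hSdef, hQdef]
  have hΦ : ∀ t : ℝ, FJ t * B * Bᵀ * (FJ t)ᵀ
      = Tinv * (fromBlocks (S t) 0 0 0 : Matrix (Fin nf ⊕ Fin ni) (Fin nf ⊕ Fin ni) ℝ) * Tinvᵀ := by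
    intro t
    calc FJ t * B * Bᵀ * (FJ t)ᵀ
        = Tinv * ((fromBlocks (H t) 0 0 0 : Matrix (Fin nf ⊕ Fin ni) (Fin nf ⊕ Fin ni) ℝ)
            * (U * Uᵀ)
            * (fromBlocks (H t) 0 0 0 : Matrix (Fin nf ⊕ Fin ni) (Fin nf ⊕ Fin ni) ℝ)ᵀ) * Tinvᵀ := by
          rw [hFJ t]
          simp only [hUdef, Matrix.transpose_mul, Matrix.mul_assoc]
          rfl
      _ = _ := by rw [hmid t]
  -- entrywise formula for the integrand
  have hΦentry : ∀ (t : ℝ) (i j : Fin nf ⊕ Fin ni),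
      (FJ t * B * Bᵀ * (FJ t)ᵀ) i j
        = ∑ a, ∑ b, Tinv i (Sum.inl a) * S t a b * Tinvᵀ (Sum.inl b) j := by
    intro t i j
    rw [hΦ t]
    exact sandwich_entry _ _ _ _ _
  -- integrability (first conjunct)
  have hInt : MatIntegrableIoi (fun t => FJ t * B * Bᵀ * (FJ t)ᵀ) := by
    intro i j
    have : (fun t => (FJ t * B * Bᵀ * (FJ t)ᵀ) i j)
        = fun t => ∑ a, ∑ b, Tinv i (Sum.inl a) * S t a b * Tinvᵀ (Sum.inl b) j :=
      funext fun t => hΦentry t i j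
    rw [this]
    exact integrable_finset_sum _ fun a _ => integrable_finset_sum _ fun b _ =>
      ((hSint a b).const_mul _).mul_const _
  -- Pp in block form
  have hPpSig : Pp = Tinv
      * (fromBlocks Sig 0 0 0 : Matrix (Fin nf ⊕ Fin ni) (Fin nf ⊕ Fin ni) ℝ) * Tinvᵀ := by
    rw [hPp]
    ext i j
    show (∫ t in Set.Ioi (0:ℝ), (FJ t * B * Bᵀ * (FJ t)ᵀ) i j) = _
    rw [sandwich_entry]
    have h1 : (fun t => (FJ t * B * Bᵀ * (FJ t)ᵀ) i j)
        = fun t => ∑ a, ∑ b, Tinv i (Sum.inl a) * S t a b * Tinvᵀ (Sum.inl b) j :=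
      funext fun t => hΦentry t i j
    rw [h1, integral_finset_sum _ fun a _ => integrable_finset_sum _ fun b _ =>
      ((hSint a b).const_mul _).mul_const _]
    refine Finset.sum_congr rfl fun a _ => ?_
    rw [integral_finset_sum _ fun b _ => ((hSint a b).const_mul _).mul_const _]
    refine Finset.sum_congr rfl fun b _ => ?_
    rw [integral_mul_const, integral_const_mul]
    rfl
  -- cancellation helpers
  have hTc : ∀ X : Matrix (Fin nf ⊕ Fin ni) (Fin nf ⊕ Fin ni) ℝ, T * (Tinv * X) = X :=
    fun X => by rw [← Matrix.mul_assoc, hT, Matrix.one_mul]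
  have hTc' : ∀ X : Matrix (Fin nf ⊕ Fin ni) (Fin nf ⊕ Fin ni) ℝ, Tinvᵀ * (Tᵀ * X) = X :=
    fun X => by
      rw [← Matrix.mul_assoc, ← Matrix.transpose_mul, hT, Matrix.transpose_one, Matrix.one_mul]
  -- block product helpers
  have hb1 : ∀ X : Matrix (Fin nf) (Fin nf) ℝ,
      (fromBlocks 1 0 0 N : Matrix (Fin nf ⊕ Fin ni) (Fin nf ⊕ Fin ni) ℝ)
        * fromBlocks X 0 0 0 = fromBlocks X 0 0 0 :=
    fun X => by simp [Matrix.fromBlocks_multiply]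
  have hb2 : ∀ X : Matrix (Fin nf) (Fin nf) ℝ,
      (fromBlocks X 0 0 0 : Matrix (Fin nf ⊕ Fin ni) (Fin nf ⊕ Fin ni) ℝ)
        * fromBlocks Jᵀ 0 0 1 = fromBlocks (X * Jᵀ) 0 0 0 :=
    fun X => by simp [Matrix.fromBlocks_multiply]
  have hb3 : ∀ X : Matrix (Fin nf) (Fin nf) ℝ,
      (fromBlocks J 0 0 1 : Matrix (Fin nf ⊕ Fin ni) (Fin nf ⊕ Fin ni) ℝ)
        * fromBlocks X 0 0 0 = fromBlocks (J * X) 0 0 0 :=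
    fun X => by simp [Matrix.fromBlocks_multiply]
  have hb4 : ∀ X : Matrix (Fin nf) (Fin nf) ℝ,
      (fromBlocks X 0 0 0 : Matrix (Fin nf ⊕ Fin ni) (Fin nf ⊕ Fin ni) ℝ)
        * fromBlocks 1 0 0 Nᵀ = fromBlocks X 0 0 0 :=
    fun X => by simp [Matrix.fromBlocks_multiply]
  have hb5 : ∀ X : Matrix (Fin nf) (Fin nf) ℝ,
      (fromBlocks 1 0 0 0 : Matrix (Fin nf ⊕ Fin ni) (Fin nf ⊕ Fin ni) ℝ)
        * fromBlocks X 0 0 0 = fromBlocks X 0 0 0 :=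
    fun X => by simp [Matrix.fromBlocks_multiply]
  have hb6 : ∀ X : Matrix (Fin nf) (Fin nf) ℝ,
      (fromBlocks X 0 0 0 : Matrix (Fin nf ⊕ Fin ni) (Fin nf ⊕ Fin ni) ℝ)
        * fromBlocks 1 0 0 0 = fromBlocks X 0 0 0 :=
    fun X => by simp [Matrix.fromBlocks_multiply]
  -- Lyapunov equation (second conjunct)
  have hLyap : E * Pp * Aᵀ + A * Pp * Eᵀ = -(Pl * B * Bᵀ * Plᵀ) := by
    have key1 : W * fromBlocks 1 0 0 N * T
        * (Tinv * (fromBlocks Sig 0 0 0 : Matrix (Fin nf ⊕ Fin ni) (Fin nf ⊕ Fin ni) ℝ) * Tinvᵀ)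
        * (W * fromBlocks J 0 0 1 * T)ᵀ
        = W * (fromBlocks (Sig * Jᵀ) 0 0 0 : Matrix (Fin nf ⊕ Fin ni) (Fin nf ⊕ Fin ni) ℝ) * Wᵀ := by
      calc W * fromBlocks 1 0 0 N * T
            * (Tinv * (fromBlocks Sig 0 0 0 : Matrix (Fin nf ⊕ Fin ni) (Fin nf ⊕ Fin ni) ℝ) * Tinvᵀ)
            * (W * fromBlocks J 0 0 1 * T)ᵀ
          = W * (fromBlocks 1 0 0 N * (T * (Tinv * (fromBlocks Sig 0 0 0
              * (Tinvᵀ * (Tᵀ * ((fromBlocks Jᵀ 0 0 1 :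
                  Matrix (Fin nf ⊕ Fin ni) (Fin nf ⊕ Fin ni) ℝ) * Wᵀ))))))) := by
            simp only [Matrix.transpose_mul, Matrix.fromBlocks_transpose,
              Matrix.transpose_zero, Matrix.transpose_one, Matrix.mul_assoc]
        _ = W * (fromBlocks 1 0 0 N * (fromBlocks Sig 0 0 0
              * ((fromBlocks Jᵀ 0 0 1 : Matrix (Fin nf ⊕ Fin ni) (Fin nf ⊕ Fin ni) ℝ) * Wᵀ))) := by
            rw [hTc, hTc']
        _ = W * (fromBlocks (Sig * Jᵀ) 0 0 0 * Wᵀ) := by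
            rw [← Matrix.mul_assoc (fromBlocks Sig 0 0 0), hb2, ← Matrix.mul_assoc
              (fromBlocks 1 0 0 N), hb1]
        _ = W * fromBlocks (Sig * Jᵀ) 0 0 0 * Wᵀ := (Matrix.mul_assoc _ _ _).symm
    have key2 : W * fromBlocks J 0 0 1 * T
        * (Tinv * (fromBlocks Sig 0 0 0 : Matrix (Fin nf ⊕ Fin ni) (Fin nf ⊕ Fin ni) ℝ) * Tinvᵀ)
        * (W * fromBlocks 1 0 0 N * T)ᵀ
        = W * (fromBlocks (J * Sig) 0 0 0 : Matrix (Fin nf ⊕ Fin ni) (Fin nf ⊕ Fin ni) ℝ) * Wᵀ := by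
      calc W * fromBlocks J 0 0 1 * T
            * (Tinv * (fromBlocks Sig 0 0 0 : Matrix (Fin nf ⊕ Fin ni) (Fin nf ⊕ Fin ni) ℝ) * Tinvᵀ)
            * (W * fromBlocks 1 0 0 N * T)ᵀ
          = W * (fromBlocks J 0 0 1 * (T * (Tinv * (fromBlocks Sig 0 0 0
              * (Tinvᵀ * (Tᵀ * ((fromBlocks 1 0 0 Nᵀ :
                  Matrix (Fin nf ⊕ Fin ni) (Fin nf ⊕ Fin ni) ℝ) * Wᵀ))))))) := by
            simp only [Matrix.transpose_mul, Matrix.fromBlocks_transpose,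
              Matrix.transpose_zero, Matrix.transpose_one, Matrix.mul_assoc]
        _ = W * (fromBlocks J 0 0 1 * (fromBlocks Sig 0 0 0
              * ((fromBlocks 1 0 0 Nᵀ : Matrix (Fin nf ⊕ Fin ni) (Fin nf ⊕ Fin ni) ℝ) * Wᵀ))) := by
            rw [hTc, hTc']
        _ = W * (fromBlocks (J * Sig) 0 0 0 * Wᵀ) := by
            rw [← Matrix.mul_assoc (fromBlocks Sig 0 0 0), hb4, ← Matrix.mul_assoc
              (fromBlocks J 0 0 1), hb3]
        _ = W * fromBlocks (J * Sig) 0 0 0 * Wᵀ := (Matrix.mul_assoc _ _ _).symm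
    have hmid2 : (fromBlocks 1 0 0 0 : Matrix (Fin nf ⊕ Fin ni) (Fin nf ⊕ Fin ni) ℝ)
        * (U * Uᵀ) * (fromBlocks 1 0 0 0 : Matrix (Fin nf ⊕ Fin ni) (Fin nf ⊕ Fin ni) ℝ)
        = fromBlocks Q 0 0 0 := by
      conv_lhs => rw [← Matrix.fromBlocks_toBlocks (U * Uᵀ)]
      rw [Matrix.fromBlocks_multiply, Matrix.fromBlocks_multiply]
      simp [hQdef]
    have key3 : W * fromBlocks 1 0 0 0 * Winv * B * Bᵀ * (W * fromBlocks 1 0 0 0 * Winv)ᵀ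
        = W * (fromBlocks Q 0 0 0 : Matrix (Fin nf ⊕ Fin ni) (Fin nf ⊕ Fin ni) ℝ) * Wᵀ := by
      calc W * fromBlocks 1 0 0 0 * Winv * B * Bᵀ * (W * fromBlocks 1 0 0 0 * Winv)ᵀ
          = W * ((fromBlocks 1 0 0 0 : Matrix (Fin nf ⊕ Fin ni) (Fin nf ⊕ Fin ni) ℝ)
              * (U * Uᵀ)
              * (fromBlocks 1 0 0 0 : Matrix (Fin nf ⊕ Fin ni) (Fin nf ⊕ Fin ni) ℝ)) * Wᵀ := by
            simp only [hUdef, Matrix.transpose_mul, Matrix.fromBlocks_transpose,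
              Matrix.transpose_zero, Matrix.transpose_one, Matrix.mul_assoc]
        _ = W * fromBlocks Q 0 0 0 * Wᵀ := by rw [hmid2]
    rw [hPpSig, hE, hA, hPl, key1, key2, key3]
    rw [show W * (fromBlocks (Sig * Jᵀ) 0 0 0 : Matrix (Fin nf ⊕ Fin ni) (Fin nf ⊕ Fin ni) ℝ) * Wᵀ
          + W * (fromBlocks (J * Sig) 0 0 0 : Matrix (Fin nf ⊕ Fin ni) (Fin nf ⊕ Fin ni) ℝ) * Wᵀ
        = W * ((fromBlocks (Sig * Jᵀ) 0 0 0 : Matrix (Fin nf ⊕ Fin ni) (Fin nf ⊕ Fin ni) ℝ)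
          + fromBlocks (J * Sig) 0 0 0) * Wᵀ from by rw [Matrix.mul_add, Matrix.add_mul]]
    rw [Matrix.fromBlocks_add,
      show Sig * Jᵀ + J * Sig = -Q from by rw [add_comm]; exact hLyapCore]
    rw [show (fromBlocks (-Q) (0+0) (0+0) (0+0) :
          Matrix (Fin nf ⊕ Fin ni) (Fin nf ⊕ Fin ni) ℝ)
        = -(fromBlocks Q 0 0 0) from by simp [Matrix.fromBlocks_neg]]
    rw [Matrix.mul_neg, Matrix.neg_mul]
  -- projection condition (third conjunct)
  have hProj : Pp = Pr * Pp * Prᵀ := by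
    rw [hPpSig, hPr]
    symm
    calc Tinv * fromBlocks 1 0 0 0 * T
          * (Tinv * (fromBlocks Sig 0 0 0 : Matrix (Fin nf ⊕ Fin ni) (Fin nf ⊕ Fin ni) ℝ) * Tinvᵀ)
          * (Tinv * fromBlocks 1 0 0 0 * T)ᵀ
        = Tinv * (fromBlocks 1 0 0 0 * (T * (Tinv * (fromBlocks Sig 0 0 0
            * (Tinvᵀ * (Tᵀ * ((fromBlocks 1 0 0 0 :
                Matrix (Fin nf ⊕ Fin ni) (Fin nf ⊕ Fin ni) ℝ) * Tinvᵀ))))))) := by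
          simp only [Matrix.transpose_mul, Matrix.fromBlocks_transpose,
            Matrix.transpose_zero, Matrix.transpose_one, Matrix.mul_assoc]
      _ = Tinv * (fromBlocks 1 0 0 0 * (fromBlocks Sig 0 0 0
            * ((fromBlocks 1 0 0 0 : Matrix (Fin nf ⊕ Fin ni) (Fin nf ⊕ Fin ni) ℝ) * Tinvᵀ))) := by
          rw [hTc, hTc']
      _ = Tinv * (fromBlocks Sig 0 0 0 * Tinvᵀ) := by
          rw [← Matrix.mul_assoc (fromBlocks Sig 0 0 0), hb6, ← Matrix.mul_assoc
            (fromBlocks 1 0 0 0), hb5]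
      _ = Tinv * fromBlocks Sig 0 0 0 * Tinvᵀ := (Matrix.mul_assoc _ _ _).symm
  exact ⟨hInt, hLyap, hProj⟩
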